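/- For every positive integer n, d_n(x) = \sum_{k=0}^{n} (-1)^{n-k} \binom{n}{k} A_k(x), where A_k(x) is the Eulerian polynomial (with A_0(x) = 1) and d_n(x) = \sum_{w \in D_n} x^{exc(w)} is the derangement polynomial. -/

import Mathlib

open Polynomial Finset

/-- The number of excedances of a permutation: positions `i` with `w(i) > i`. -/
def exc {n : ℕ} (w : Equiv.Perm (Fin n)) : ℕ :=
  (Finset.univ.filter fun i : Fin n => (i : ℕ) < (w i : ℕ)).card

/-- The Eulerian polynomial `A_n(x) = ∑_{w ∈ S_n} x^{exc(w)}` (excedance version). -/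
noncomputable def eulerianExc (n : ℕ) : Polynomial ℝ :=
  ∑ w : Equiv.Perm (Fin n), Polynomial.X ^ exc w

/-- The derangement polynomial `d_n(x) = ∑_{w ∈ D_n} x^{exc(w)}`. -/
noncomputable def derangePoly (n : ℕ) : Polynomial ℝ :=
  ∑ w ∈ Finset.univ.filter (fun w : Equiv.Perm (Fin n) => ∀ i, w i ≠ i),
    Polynomial.X ^ exc w

/-- The sum of `x^{exc w}` over permutations fixing everything outside `T`
equals the Eulerian polynomial of `|T|`. -/
lemma sum_fix_outside (n : ℕ) (T : Finset (Fin n)) :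
    ∑ w ∈ Finset.univ.filter (fun w : Equiv.Perm (Fin n) => ∀ i ∉ T, w i = i),
      (Polynomial.X : Polynomial ℝ) ^ exc w = eulerianExc T.card := by
  classical
  set k := T.card with hk
  set e : Fin k ≃o {x // x ∈ T} := T.orderIsoOfFin rfl with he
  set φ : Equiv.Perm (Fin k) → Equiv.Perm (Fin n) :=
    fun σ => Equiv.Perm.ofSubtype (e.toEquiv.permCongr σ) with hφ
  have hmem : ∀ σ (i : Fin n) (hi : i ∈ T), φ σ i = ↑(e (σ (e.symm ⟨i, hi⟩))) := by
    intro σ i hi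
    simp [hφ, Equiv.Perm.ofSubtype_apply_of_mem _ hi, Equiv.permCongr_apply]
  have hnot : ∀ σ (i : Fin n), i ∉ T → φ σ i = i := by
    intro σ i hi
    exact Equiv.Perm.ofSubtype_apply_of_not_mem _ hi
  have hmem' : ∀ σ (j : Fin k), φ σ (↑(e j)) = ↑(e (σ j)) := by
    intro σ j
    rw [hmem σ _ (e j).2]
    congr 2
    rw [Subtype.coe_eta, e.symm_apply_apply]
  -- exc preservation
  have hexc : ∀ σ, exc (φ σ) = exc σ := by
    intro σ
    unfold exc
    have hT : ∀ i ∈ Finset.univ.filter (fun i : Fin n => (i : ℕ) < (φ σ i : ℕ)), i ∈ T := by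
      intro i hi
      simp only [mem_filter] at hi
      by_contra h
      rw [hnot σ i h] at hi
      exact lt_irrefl _ hi.2
    symm
    refine Finset.card_bij' (fun j _ => ↑(e j)) (fun i hi => e.symm ⟨i, hT i hi⟩) ?_ ?_ ?_ ?_
    · intro j hj
      simp only [mem_filter, mem_univ, true_and] at hj ⊢
      rw [hmem' σ j]
      have : e j < e (σ j) := e.lt_iff_lt.2 (Fin.lt_def.2 hj)
      exact this
    · intro i hi
      have hiT := hT i hi
      simp only [mem_filter, mem_univ, true_and] at hi ⊢
      have h1 : φ σ i = ↑(e (σ (e.symm ⟨i, hiT⟩))) := hmem σ i hiT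
      rw [h1] at hi
      have : (⟨i, hiT⟩ : {x // x ∈ T}) < e (σ (e.symm ⟨i, hiT⟩)) := hi
      have h2 : e (e.symm ⟨i, hiT⟩) < e (σ (e.symm ⟨i, hiT⟩)) := by
        rwa [e.apply_symm_apply]
      exact Fin.lt_def.1 (e.lt_iff_lt.1 h2)
    · intro j hj
      simp
    · intro i hi
      simp [e.apply_symm_apply]
  -- bijection of sums
  rw [eulerianExc]
  symm
  have hψmem : ∀ (w : Equiv.Perm (Fin n)),
      w ∈ Finset.univ.filter (fun w : Equiv.Perm (Fin n) => ∀ i ∉ T, w i = i) →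
      ∀ x : Fin n, x ∈ T ↔ w x ∈ T := by
    intro w hw x
    simp only [mem_filter, mem_univ, true_and] at hw
    constructor
    · intro hx
      by_contra h
      have h1 : w (w x) = w x := hw _ h
      have h2 : w x = x := w.injective h1
      rw [h2] at h; exact h hx
    · intro hx
      by_contra h
      rw [hw x h] at hx; exact h hx
  refine Finset.sum_bij' (fun σ _ => φ σ)
    (fun w hw => (e.toEquiv.permCongr.symm (w.subtypePerm (fun x => (hψmem w hw x).symm)))) ?_ ?_ ?_ ?_ ?_
  · intro σ _
    simp only [mem_filter, mem_univ, true_and]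
    exact fun i hi => hnot σ i hi
  · intro w hw; exact mem_univ _
  · intro σ _
    refine Equiv.ext fun j => ?_
    simp only [Equiv.permCongr_symm, Equiv.permCongr_apply, Equiv.symm_symm,
      Equiv.Perm.subtypePerm_apply]
    rw [Equiv.symm_apply_eq]
    apply Subtype.ext
    simpa using hmem' σ j
  · intro w hw
    refine Equiv.ext fun i => ?_
    by_cases hi : i ∈ T
    · rw [hmem _ i hi]
      simp [Equiv.permCongr_apply]
    · rw [hnot _ i hi]
      simp only [mem_filter, mem_univ, true_and] at hw
      exact (hw i hi).symm
  · intro σ _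
    rw [hexc σ]

/-- `d_n(x) = ∑_{k=0}^{n} (-1)^{n-k} C(n,k) A_k(x)`. -/
theorem derangePoly_inclusion_exclusion (n : ℕ) (hn : 1 ≤ n) :
    derangePoly n = ∑ k ∈ Finset.range (n + 1),
      (-1 : Polynomial ℝ) ^ (n - k) * Polynomial.C ((n.choose k : ℝ)) * eulerianExc k := by
  classical
  have ind : ∀ A : Finset (Fin n),
      (∑ S ∈ A.powerset, (-1 : Polynomial ℝ) ^ S.card) = if A = ∅ then 1 else 0 := by
    intro A
    have h := Finset.sum_powerset_neg_one_pow_card (x := A)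
    have h2 : ((∑ S ∈ A.powerset, (-1 : ℤ) ^ S.card : ℤ) : Polynomial ℝ)
        = ((if A = ∅ then 1 else 0 : ℤ) : Polynomial ℝ) :=
      congrArg (fun z : ℤ => (z : Polynomial ℝ)) h
    push_cast at h2
    simpa [apply_ite (fun z : ℤ => (z : Polynomial ℝ))] using h2
  have step1 : derangePoly n = ∑ w : Equiv.Perm (Fin n),
      (∑ S ∈ (Finset.univ.filter fun i => w i = i).powerset,
        (-1 : Polynomial ℝ) ^ S.card) * Polynomial.X ^ exc w := by
    rw [derangePoly, Finset.sum_filter]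
    refine Finset.sum_congr rfl fun w _ => ?_
    rw [ind]
    by_cases h : ∀ i, w i ≠ i
    · rw [if_pos h, if_pos, one_mul]
      rw [Finset.filter_eq_empty_iff]
      exact fun i _ => h i
    · rw [if_neg h, if_neg, zero_mul]
      rw [Finset.filter_eq_empty_iff]
      push_neg at h ⊢
      obtain ⟨i, hi⟩ := h
      exact ⟨i, Finset.mem_univ i, hi⟩
  have step2 : derangePoly n = ∑ S : Finset (Fin n),
      (-1 : Polynomial ℝ) ^ S.card *
        ∑ w ∈ Finset.univ.filter (fun w : Equiv.Perm (Fin n) => ∀ i ∉ Sᶜ, w i = i),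
          Polynomial.X ^ exc w := by
    rw [step1]
    have : ∀ w : Equiv.Perm (Fin n),
        (∑ S ∈ (Finset.univ.filter fun i => w i = i).powerset,
          (-1 : Polynomial ℝ) ^ S.card) * Polynomial.X ^ exc w
        = ∑ S : Finset (Fin n),
            if S ∈ (Finset.univ.filter fun i => w i = i).powerset
            then (-1 : Polynomial ℝ) ^ S.card * Polynomial.X ^ exc w else 0 := by
      intro w
      rw [Finset.sum_ite_mem, Finset.univ_inter, Finset.sum_mul]
    simp_rw [this]
    rw [Finset.sum_comm]
    refine Finset.sum_congr rfl fun S _ => ?_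
    rw [Finset.mul_sum, ← Finset.sum_filter]
    refine Finset.sum_congr ?_ fun w _ => rfl
    ext w
    simp only [Finset.mem_filter, Finset.mem_univ, true_and, Finset.mem_powerset,
      Finset.subset_iff, Finset.mem_compl, not_not]
  have step3 : derangePoly n = ∑ S : Finset (Fin n),
      (-1 : Polynomial ℝ) ^ S.card * eulerianExc (n - S.card) := by
    rw [step2]
    refine Finset.sum_congr rfl fun S _ => ?_
    rw [sum_fix_outside n Sᶜ, Finset.card_compl, Fintype.card_fin]
  rw [step3]
  have step4 : ∑ S : Finset (Fin n),
      (-1 : Polynomial ℝ) ^ S.card * eulerianExc (n - S.card)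
      = ∑ j ∈ Finset.range (n + 1),
          (n.choose j : Polynomial ℝ) * ((-1 : Polynomial ℝ) ^ j * eulerianExc (n - j)) := by
    rw [← Finset.powerset_univ, Finset.sum_powerset]
    rw [Finset.card_univ, Fintype.card_fin]
    refine Finset.sum_congr rfl fun j hj => ?_
    rw [Finset.sum_congr rfl (fun S hS => by
      rw [(Finset.mem_powersetCard.1 hS).2]), Finset.sum_const,
      Finset.card_powersetCard, Finset.card_univ, Fintype.card_fin, nsmul_eq_mul]
  rw [step4]
  rw [← Finset.sum_range_reflect]
  refine Finset.sum_congr rfl fun j hj => ?_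
  have hj' : j ≤ n := Nat.lt_succ_iff.1 (Finset.mem_range.1 hj)
  have h1 : n + 1 - 1 - j = n - j := by omega
  have h2 : n - (n - j) = j := by omega
  rw [h1, h2, Nat.choose_symm hj']
  have : (Polynomial.C ((n.choose j : ℝ))) = ((n.choose j : ℕ) : Polynomial ℝ) :=
    map_natCast Polynomial.C _
  rw [this]; ring
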